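/- arXiv:1608.03154 — 3 statements merged into one kernel-verified Lean document; each statement's English description precedes it below -/
import Mathlib

section
/- Let d(z) = (1 - 2z/γ²)^{-1/2} exp(δγ(1 - √(1 - 2z/γ²))) for z ≤ 0, with δ, γ > 0. Then ∫_{-∞}^0 d(z) dz = γ/δ. -/
open MeasureTheory Real

/-- For the sup-IG trawl function
`d(z) = (1 - 2z/γ²)^{-1/2} exp(δγ(1 - √(1 - 2z/γ²)))` with `δ, γ > 0`:
`∫_{-∞}^0 d(z) dz = γ/δ`. -/
theorem supIG_trawl_measure (δ γ : ℝ) (hδ : 0 < δ) (hγ : 0 < γ) :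
    (∫ z in Set.Iic (0 : ℝ),
        (1 - 2 * z / γ ^ 2) ^ (-(1 / 2 : ℝ)) *
          Real.exp (δ * γ * (1 - Real.sqrt (1 - 2 * z / γ ^ 2)))) = γ / δ := by
  have hγ2 : (0:ℝ) < γ ^ 2 := by positivity
  -- reflect to an integral over `Ioi 0`
  rw [show Set.Iic (0:ℝ) = Set.Iic (-0) by rw [neg_zero], ← integral_comp_neg_Ioi]
  -- antiderivative
  set g : ℝ → ℝ := fun x => -(γ / δ * Real.exp (δ * γ * (1 - Real.sqrt (1 - 2 * (-x) / γ ^ 2))))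
    with hg_def
  have key : ∀ x ∈ Set.Ici (0:ℝ), HasDerivAt g
      ((1 - 2 * (-x) / γ ^ 2) ^ (-(1 / 2 : ℝ)) *
        Real.exp (δ * γ * (1 - Real.sqrt (1 - 2 * (-x) / γ ^ 2)))) x := by
    intro x hx
    have hxpos : (0:ℝ) ≤ x := hx
    have hupos : (0:ℝ) < 1 - 2 * (-x) / γ ^ 2 := by
      have h2x : 0 ≤ 2 * x / γ ^ 2 := by positivity
      have hre : 2 * (-x) / γ ^ 2 = -(2 * x / γ ^ 2) := by ring
      linarith
    have hsqrt_pos : 0 < Real.sqrt (1 - 2 * (-x) / γ ^ 2) := Real.sqrt_pos.2 hupos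
    have hu : HasDerivAt (fun y : ℝ => 1 - 2 * (-y) / γ ^ 2) (2 / γ ^ 2) x := by
      have : HasDerivAt (fun y : ℝ => 1 - 2 * (-y) / γ ^ 2)
          (1 * 0 - (2 / γ ^ 2) * (-1) * 1) x := by
        have h1 : HasDerivAt (fun y : ℝ => 2 * (-y) / γ ^ 2) ((2 / γ ^ 2) * (-1)) x := by
          have : HasDerivAt (fun y : ℝ => (2 / γ ^ 2) * (-y)) ((2 / γ ^ 2) * (-1)) x :=
            ((hasDerivAt_id x).neg).const_mul _
          convert this using 2 with y
          ring
        have h2 := (hasDerivAt_const x (1:ℝ)).sub h1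
        rw [show (1:ℝ) * 0 - 2 / γ ^ 2 * (-1) * 1 = 0 - 2 / γ ^ 2 * (-1) by ring]
        exact h2
      simpa using this
    have hs : HasDerivAt (fun y : ℝ => Real.sqrt (1 - 2 * (-y) / γ ^ 2))
        ((2 / γ ^ 2) / (2 * Real.sqrt (1 - 2 * (-x) / γ ^ 2))) x :=
      hu.sqrt hupos.ne'
    have hinner : HasDerivAt (fun y : ℝ => δ * γ * (1 - Real.sqrt (1 - 2 * (-y) / γ ^ 2)))
        (δ * γ * (-((2 / γ ^ 2) / (2 * Real.sqrt (1 - 2 * (-x) / γ ^ 2))))) x := by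
      have := ((hasDerivAt_const x (1:ℝ)).sub hs).const_mul (δ * γ)
      simpa using this
    have hexp := hinner.exp
    have hfin := (hexp.const_mul (γ / δ)).neg
    refine HasDerivAt.congr_deriv hfin ?_
    have hrpow : (1 - 2 * (-x) / γ ^ 2) ^ (-(1 / 2 : ℝ))
        = (Real.sqrt (1 - 2 * (-x) / γ ^ 2))⁻¹ := by
      rw [Real.rpow_neg hupos.le, ← Real.sqrt_eq_rpow]
    rw [hrpow]
    field_simp
  have hnonneg : ∀ x ∈ Set.Ioi (0:ℝ), 0 ≤
      (1 - 2 * (-x) / γ ^ 2) ^ (-(1 / 2 : ℝ)) *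
        Real.exp (δ * γ * (1 - Real.sqrt (1 - 2 * (-x) / γ ^ 2))) := by
    intro x hx
    have hupos : (0:ℝ) ≤ 1 - 2 * (-x) / γ ^ 2 := by
      have hx0 : (0:ℝ) < x := hx
      have h2x : 0 ≤ 2 * x / γ ^ 2 := by positivity
      have hre : 2 * (-x) / γ ^ 2 = -(2 * x / γ ^ 2) := by ring
      linarith
    positivity
  have htend : Filter.Tendsto g Filter.atTop (nhds 0) := by
    have h1 : Filter.Tendsto (fun x : ℝ => 1 - 2 * (-x) / γ ^ 2) Filter.atTop Filter.atTop := by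
      have : Filter.Tendsto (fun x : ℝ => (2 / γ ^ 2) * x + 1) Filter.atTop Filter.atTop :=
        Filter.tendsto_atTop_add_const_right _ 1
          (Filter.Tendsto.const_mul_atTop (by positivity) Filter.tendsto_id)
      convert this using 2 with x
      ring
    have hsq : Filter.Tendsto Real.sqrt Filter.atTop Filter.atTop := by
      refine Filter.tendsto_atTop_atTop.2 fun b => ⟨(max b 0) ^ 2, fun a ha => ?_⟩
      calc b ≤ max b 0 := le_max_left _ _
        _ = Real.sqrt ((max b 0) ^ 2) := (Real.sqrt_sq (le_max_right _ _)).symm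
        _ ≤ Real.sqrt a := Real.sqrt_le_sqrt ha
    have h2 : Filter.Tendsto (fun x : ℝ => Real.sqrt (1 - 2 * (-x) / γ ^ 2))
        Filter.atTop Filter.atTop := hsq.comp h1
    have h3 : Filter.Tendsto (fun x : ℝ => δ * γ * (1 - Real.sqrt (1 - 2 * (-x) / γ ^ 2)))
        Filter.atTop Filter.atBot := by
      apply Filter.Tendsto.const_mul_atBot (by positivity)
      exact Filter.tendsto_atBot_add_const_left _ 1 (Filter.tendsto_neg_atBot_iff.mpr h2)
    have h4 : Filter.Tendsto (fun x : ℝ =>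
        Real.exp (δ * γ * (1 - Real.sqrt (1 - 2 * (-x) / γ ^ 2)))) Filter.atTop (nhds 0) :=
      Real.tendsto_exp_atBot.comp h3
    have h5 := (h4.const_mul (γ / δ)).neg
    rw [mul_zero, neg_zero] at h5
    exact h5
  rw [integral_Ioi_of_hasDerivAt_of_nonneg' key hnonneg htend]
  simp [hg_def]
end

section
/- Let d(z) = (1 - 2z/γ²)^{-1/2} exp(δγ(1 - √(1 - 2z/γ²))) be the sup-IG trawl function with δ, γ > 0. Then for h ≥ 0, (∫_{-∞}^0 d(z-h) dz)/(∫_{-∞}^0 d(z) dz) = exp(δγ(1 - √(1 + 2h/γ²))). -/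
open MeasureTheory Real Filter

lemma supIG_integral (δ γ a : ℝ) (hδ : 0 < δ) (hγ : 0 < γ) (ha : 0 ≤ a) :
    (∫ z in Set.Iic (0 : ℝ),
        (1 - 2 * (z - a) / γ ^ 2) ^ (-(1 / 2 : ℝ)) *
          Real.exp (δ * γ * (1 - Real.sqrt (1 - 2 * (z - a) / γ ^ 2)))) =
      γ / δ * Real.exp (δ * γ * (1 - Real.sqrt (1 + 2 * a / γ ^ 2))) := by
  have hγ2 : (0:ℝ) < γ ^ 2 := by positivity
  -- reflect to Ioi 0
  have hrefl : (∫ z in Set.Iic (0 : ℝ),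
        (1 - 2 * (z - a) / γ ^ 2) ^ (-(1 / 2 : ℝ)) *
          Real.exp (δ * γ * (1 - Real.sqrt (1 - 2 * (z - a) / γ ^ 2)))) =
      ∫ x in Set.Ioi (0 : ℝ),
        (1 + 2 * (x + a) / γ ^ 2) ^ (-(1 / 2 : ℝ)) *
          Real.exp (δ * γ * (1 - Real.sqrt (1 + 2 * (x + a) / γ ^ 2))) := by
    have := integral_comp_neg_Ioi (0:ℝ) (fun z : ℝ =>
      (1 - 2 * (z - a) / γ ^ 2) ^ (-(1 / 2 : ℝ)) *
        Real.exp (δ * γ * (1 - Real.sqrt (1 - 2 * (z - a) / γ ^ 2))))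
    rw [neg_zero] at this
    rw [← this]
    refine setIntegral_congr_fun measurableSet_Ioi fun x _ => ?_
    have heq : 1 - 2 * (-x - a) / γ ^ 2 = 1 + 2 * (x + a) / γ ^ 2 := by ring
    simp only [heq]
  rw [hrefl]
  set g : ℝ → ℝ := fun x => -(γ / δ) * Real.exp (δ * γ * (1 - Real.sqrt (1 + 2 * (x + a) / γ ^ 2)))
    with hg
  have hu : ∀ x : ℝ, 0 ≤ x → (1:ℝ) ≤ 1 + 2 * (x + a) / γ ^ 2 := fun x hx => by
    have : 0 ≤ 2 * (x + a) / γ ^ 2 := by positivity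
    linarith
  have hderiv : ∀ x ∈ Set.Ici (0:ℝ), HasDerivAt g
      ((1 + 2 * (x + a) / γ ^ 2) ^ (-(1 / 2 : ℝ)) *
        Real.exp (δ * γ * (1 - Real.sqrt (1 + 2 * (x + a) / γ ^ 2)))) x := by
    intro x hx
    have hux : (0:ℝ) < 1 + 2 * (x + a) / γ ^ 2 := lt_of_lt_of_le one_pos (hu x hx)
    have hsx : (0:ℝ) < Real.sqrt (1 + 2 * (x + a) / γ ^ 2) := Real.sqrt_pos.2 hux
    have h1 : HasDerivAt (fun y : ℝ => 1 + 2 * (y + a) / γ ^ 2) (2 / γ ^ 2) x := by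
      have : HasDerivAt (fun y : ℝ => 1 + 2 * (y + a) / γ ^ 2) (0 + 2 * (1 + 0) / γ ^ 2) x :=
        (hasDerivAt_const x (1:ℝ)).add
          ((((hasDerivAt_id x).add (hasDerivAt_const x a)).const_mul 2).div_const (γ ^ 2))
      simpa using this
    have h2 : HasDerivAt (fun y : ℝ => Real.sqrt (1 + 2 * (y + a) / γ ^ 2))
        ((2 / γ ^ 2) / (2 * Real.sqrt (1 + 2 * (x + a) / γ ^ 2))) x :=
      h1.sqrt (ne_of_gt hux)
    have h3 : HasDerivAt (fun y : ℝ =>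
        Real.exp (δ * γ * (1 - Real.sqrt (1 + 2 * (y + a) / γ ^ 2))))
        (Real.exp (δ * γ * (1 - Real.sqrt (1 + 2 * (x + a) / γ ^ 2))) *
          (δ * γ * (0 - (2 / γ ^ 2) / (2 * Real.sqrt (1 + 2 * (x + a) / γ ^ 2))))) x :=
      (((hasDerivAt_const x (1:ℝ)).sub h2).const_mul (δ * γ)).exp
    have h4 := h3.const_mul (-(γ / δ))
    refine h4.congr_deriv ?_
    rw [Real.rpow_neg hux.le, ← Real.sqrt_eq_rpow]
    set s := Real.sqrt (1 + 2 * (x + a) / γ ^ 2) with hs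
    set E := Real.exp (δ * γ * (1 - s)) with hE
    have hsne : s ≠ 0 := ne_of_gt hsx
    field_simp
    ring
  have hpos : ∀ x ∈ Set.Ioi (0:ℝ), 0 ≤ (1 + 2 * (x + a) / γ ^ 2) ^ (-(1 / 2 : ℝ)) *
      Real.exp (δ * γ * (1 - Real.sqrt (1 + 2 * (x + a) / γ ^ 2))) := by
    intro x hx
    have hux : (0:ℝ) < 1 + 2 * (x + a) / γ ^ 2 := lt_of_lt_of_le one_pos (hu x hx.out.le)
    positivity
  have hlim : Tendsto g atTop (nhds 0) := by
    have h1 : Tendsto (fun x : ℝ => 1 + 2 * (x + a) / γ ^ 2) atTop atTop :=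
      tendsto_atTop_add_const_left _ _
        (((tendsto_atTop_add_const_right _ a tendsto_id).const_mul_atTop
          two_pos).atTop_div_const hγ2)
    have h2 : Tendsto (fun x : ℝ => Real.sqrt (1 + 2 * (x + a) / γ ^ 2)) atTop atTop := by
      have := (tendsto_rpow_atTop (y := (1/2:ℝ)) (by norm_num)).comp h1
      exact this.congr fun x => (Real.sqrt_eq_rpow _).symm
    have h2' : Tendsto (fun x : ℝ => 1 - Real.sqrt (1 + 2 * (x + a) / γ ^ 2)) atTop atBot := by
      have := tendsto_atBot_add_const_left atTop (1:ℝ) (tendsto_neg_atBot_iff.2 h2)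
      simpa [sub_eq_add_neg] using this
    have h3 : Tendsto (fun x : ℝ => δ * γ * (1 - Real.sqrt (1 + 2 * (x + a) / γ ^ 2)))
        atTop atBot := (tendsto_const_mul_atBot_of_pos (by positivity)).2 h2'
    have h4 : Tendsto (fun x : ℝ =>
        Real.exp (δ * γ * (1 - Real.sqrt (1 + 2 * (x + a) / γ ^ 2)))) atTop (nhds 0) :=
      Real.tendsto_exp_atBot.comp h3
    have h5 := h4.const_mul (-(γ / δ))
    simpa only [mul_zero] using h5
  have key := integral_Ioi_of_hasDerivAt_of_nonneg' hderiv hpos hlim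
  rw [key]
  simp only [hg, zero_add]
  ring

/-- For the sup-IG trawl function with `δ, γ > 0` and `h ≥ 0`:
`(∫_{-∞}^0 d(z-h) dz)/(∫_{-∞}^0 d(z) dz) = exp(δγ(1 - √(1 + 2h/γ²)))`. -/
theorem supIG_trawl_autocorrelation (δ γ h : ℝ) (hδ : 0 < δ) (hγ : 0 < γ) (hh : 0 ≤ h) :
    (∫ z in Set.Iic (0 : ℝ),
        (1 - 2 * (z - h) / γ ^ 2) ^ (-(1 / 2 : ℝ)) *
          Real.exp (δ * γ * (1 - Real.sqrt (1 - 2 * (z - h) / γ ^ 2)))) /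
      (∫ z in Set.Iic (0 : ℝ),
        (1 - 2 * z / γ ^ 2) ^ (-(1 / 2 : ℝ)) *
          Real.exp (δ * γ * (1 - Real.sqrt (1 - 2 * z / γ ^ 2)))) =
      Real.exp (δ * γ * (1 - Real.sqrt (1 + 2 * h / γ ^ 2))) := by
  have h1 := supIG_integral δ γ h hδ hγ hh
  have h0 := supIG_integral δ γ 0 hδ hγ le_rfl
  simp only [sub_zero] at h0
  have h0' : (∫ z in Set.Iic (0 : ℝ),
        (1 - 2 * z / γ ^ 2) ^ (-(1 / 2 : ℝ)) *
          Real.exp (δ * γ * (1 - Real.sqrt (1 - 2 * z / γ ^ 2)))) = γ / δ := by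
    rw [h0]
    norm_num
  rw [h1, h0', mul_comm, mul_div_assoc, div_self (by positivity : (γ:ℝ)/δ ≠ 0), mul_one]
end

section
/- Let U, V_1, ..., V_n be independent subordinators (evaluated at time 1) without drift, with Lévy measures ν_U, ν_{V_i} on (0,∞), and let α_i ≥ 0 with α = ∑ α_i. Assume X given (Z_1,...,Z_n), Z_i = α_i U + V_i, has independent Poisson(Z_i) components. Then the Laplace transform of X = (X_1,...,X_n) at θ ∈ (0,∞)^n can be written as exp(-v + v ℒ_C(θ)) with Poisson rate v = -(K̄_U(α) + ∑_i K̄_{V_i}(1)) and jump-size Laplace transform ℒ_C(θ) = (1/v)[ ∑_{k≥1} (∑_i α_i e^{-θ_i})^k q_k^{(U)} + ∑_i ∑_{k≥1} e^{-θ_i k} q_k^{(V_i)} ], where K̄ denotes the log-Laplace transform, q_k^{(U)} = (1/k!) ∫ e^{-αx} x^k ν_U(dx), and q_k^{(V_i)} = (1/k!) ∫ e^{-x} x^k ν_{V_i}(dx). In particular X is compound Poisson. -/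
open MeasureTheory ProbabilityTheory Real

/-- Kumulant function (log-Laplace transform) of a driftless subordinator with
Lévy measure `ν`: `K̄(θ) = ∫ (e^{-θx} - 1) ν(dx)`. -/
noncomputable def kumulant (ν : Measure ℝ) (θ : ℝ) : ℝ :=
  ∫ x, (Real.exp (-(θ * x)) - 1) ∂ν

/-- The coefficients `q_k = (1/k!) ∫ e^{-c x} x^k ν(dx)`. -/
noncomputable def qCoef (ν : Measure ℝ) (c : ℝ) (k : ℕ) : ℝ :=
  (1 / (Nat.factorial k : ℝ)) * ∫ x, Real.exp (-(c * x)) * x ^ k ∂ν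

lemma ae_pos_of_Iic (ν : Measure ℝ) (h : ν (Set.Iic 0) = 0) : ∀ᵐ x ∂ν, 0 < x := by
  rw [ae_iff]; convert h using 2; ext x; simp [not_lt]

lemma real_exp_tsum (y : ℝ) : Real.exp y = ∑' n : ℕ, y ^ n / (Nat.factorial n : ℝ) := by
  rw [Real.exp_eq_exp_ℝ, NormedSpace.exp_eq_tsum_div]

lemma exp_sub_one_tsum (y : ℝ) :
    Real.exp y - 1 = ∑' k : ℕ, y ^ (k+1) / (Nat.factorial (k+1) : ℝ) := by
  have hs : Summable (fun n : ℕ => y ^ n / (Nat.factorial n : ℝ)) :=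
    Real.summable_pow_div_factorial y
  rw [real_exp_tsum y, Summable.tsum_eq_zero_add hs]
  simp

lemma one_sub_exp_le {θ x : ℝ} (hx : 0 < x) :
    1 - Real.exp (-(θ*x)) ≤ max 1 θ * min 1 x := by
  have h2 : 1 - Real.exp (-(θ*x)) ≤ θ * x := by
    have := Real.add_one_le_exp (-(θ*x)); linarith
  have hexp : 0 < Real.exp (-(θ*x)) := Real.exp_pos _
  rcases le_total 1 x with h | h
  · have hmin : min 1 x = 1 := min_eq_left h
    have : (1:ℝ) ≤ max 1 θ := le_max_left _ _
    rw [hmin]; nlinarith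
  · have hmin : min 1 x = x := min_eq_right h
    have hθ' : θ ≤ max 1 θ := le_max_right _ _
    rw [hmin]; nlinarith

lemma integrable_kum (ν : Measure ℝ) (hν0 : ν (Set.Iic 0) = 0)
    (hνint : Integrable (fun x => min 1 x) ν) {θ : ℝ} (hθ : 0 ≤ θ) :
    Integrable (fun x => Real.exp (-(θ * x)) - 1) ν := by
  have hmeas : AEStronglyMeasurable (fun x => Real.exp (-(θ * x)) - 1) ν :=
    (((measurable_const_mul θ).neg.exp).sub measurable_const).aestronglyMeasurable
  refine Integrable.mono (hνint.const_mul (max 1 θ)) hmeas ?_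
  filter_upwards [ae_pos_of_Iic ν hν0] with x hx
  have hle : Real.exp (-(θ * x)) ≤ 1 := by
    apply Real.exp_le_one_iff.2; nlinarith
  have hmin : 0 < min 1 x := lt_min one_pos hx
  have hmax : (0:ℝ) < max 1 θ := lt_of_lt_of_le one_pos (le_max_left _ _)
  rw [Real.norm_eq_abs, Real.norm_eq_abs, abs_of_nonpos (by linarith),
    abs_of_nonneg (by positivity)]
  have := one_sub_exp_le (θ := θ) hx
  linarith

lemma kumulant_nonpos (ν : Measure ℝ) (hν0 : ν (Set.Iic 0) = 0) {θ : ℝ} (hθ : 0 ≤ θ) :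
    kumulant ν θ ≤ 0 := by
  rw [kumulant]
  apply integral_nonpos_of_ae
  filter_upwards [ae_pos_of_Iic ν hν0] with x hx
  have : Real.exp (-(θ * x)) ≤ 1 := by apply Real.exp_le_one_iff.2; nlinarith
  simp only [Pi.zero_apply]; linarith

lemma qCoef_nonneg (ν : Measure ℝ) (hν0 : ν (Set.Iic 0) = 0) (c : ℝ) (k : ℕ) :
    0 ≤ qCoef ν c k := by
  rw [qCoef]
  apply mul_nonneg (by positivity)
  apply integral_nonneg_of_ae
  filter_upwards [ae_pos_of_Iic ν hν0] with x hx
  positivity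

lemma integrable_exp_mul_pow (ν : Measure ℝ) (hν0 : ν (Set.Iic 0) = 0)
    (hνint : Integrable (fun x => min 1 x) ν) {c : ℝ} (hc : 0 < c) (k : ℕ) :
    Integrable (fun x => Real.exp (-(c*x)) * x ^ (k+1)) ν := by
  set C : ℝ := max 1 ((Nat.factorial (k+1) : ℝ) * (2/c)^(k+1)) with hC
  have hC1 : (1:ℝ) ≤ C := le_max_left _ _
  refine Integrable.mono (hνint.const_mul C)
    (((measurable_const_mul c).neg.exp.mul
      (measurable_id.pow_const (k+1))).aestronglyMeasurable) ?_
  filter_upwards [ae_pos_of_Iic ν hν0] with x hx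
  have hexp : 0 < Real.exp (-(c*x)) := Real.exp_pos _
  have hnn : 0 ≤ Real.exp (-(c*x)) * x ^ (k+1) := by positivity
  have hminpos : 0 < min 1 x := lt_min one_pos hx
  rw [Real.norm_eq_abs, Real.norm_eq_abs, abs_of_nonneg hnn, abs_of_nonneg (by positivity)]
  rcases le_total x 1 with h | h
  · have hmin : min 1 x = x := min_eq_right h
    have h1 : x ^ (k+1) ≤ x := by
      calc x ^ (k+1) ≤ x ^ 1 := pow_le_pow_of_le_one hx.le h (by omega)
      _ = x := pow_one x
    have h2 : Real.exp (-(c*x)) ≤ 1 := by apply Real.exp_le_one_iff.2; nlinarith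
    rw [hmin]
    nlinarith [pow_pos hx (k+1)]
  · have hmin : min 1 x = 1 := min_eq_left h
    have ht : 0 ≤ c/2 * x := by positivity
    have key := Real.pow_div_factorial_le_exp (c/2*x) ht (k+1)
    have hfac : (0:ℝ) < (Nat.factorial (k+1) : ℝ) := by positivity
    have h1 : x ^ (k+1) ≤ (Nat.factorial (k+1) : ℝ) * (2/c)^(k+1) * Real.exp (c/2*x) := by
      have hxpow : x ^ (k+1) = (2/c)^(k+1) * (c/2*x)^(k+1) := by
        rw [← mul_pow]; congr 1; field_simp
      rw [hxpow]
      have : (c/2*x)^(k+1) ≤ (Nat.factorial (k+1) : ℝ) * Real.exp (c/2*x) := by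
        rw [div_le_iff₀ hfac] at key; linarith
      have h2c : (0:ℝ) < (2/c)^(k+1) := by positivity
      nlinarith
    have h2 : Real.exp (-(c*x)) * Real.exp (c/2*x) = Real.exp (-(c/2*x)) := by
      rw [← Real.exp_add]; congr 1; ring
    have h3 : Real.exp (-(c/2*x)) ≤ 1 := by apply Real.exp_le_one_iff.2; nlinarith
    have h4 : Real.exp (-(c*x)) * x ^ (k+1) ≤ (Nat.factorial (k+1) : ℝ) * (2/c)^(k+1) := by
      calc Real.exp (-(c*x)) * x ^ (k+1)
          ≤ Real.exp (-(c*x)) * ((Nat.factorial (k+1) : ℝ) * (2/c)^(k+1) * Real.exp (c/2*x)) :=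
            mul_le_mul_of_nonneg_left h1 hexp.le
        _ = (Nat.factorial (k+1) : ℝ) * (2/c)^(k+1) * (Real.exp (-(c*x)) * Real.exp (c/2*x)) := by
            ring
        _ ≤ (Nat.factorial (k+1) : ℝ) * (2/c)^(k+1) * 1 := by
            rw [h2]; apply mul_le_mul_of_nonneg_left h3; positivity
        _ = (Nat.factorial (k+1) : ℝ) * (2/c)^(k+1) := mul_one _
    rw [hmin, mul_one]
    exact h4.trans (le_max_right _ _)

lemma summable_fkx (c s x : ℝ) :
    Summable (fun k : ℕ =>
      (s^(k+1) * ((1:ℝ)/(Nat.factorial (k+1) : ℝ))) * (Real.exp (-(c*x)) * x^(k+1))) := by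
  have h : Summable (fun n : ℕ => (s*x)^n / (Nat.factorial n : ℝ)) :=
    Real.summable_pow_div_factorial (s*x)
  have h1 : Summable (fun k : ℕ => (s*x)^(k+1) / (Nat.factorial (k+1) : ℝ)) :=
    (summable_nat_add_iff 1).2 h
  apply Summable.congr (h1.mul_left (Real.exp (-(c*x))))
  intro k
  rw [mul_pow]
  field_simp

lemma kumulant_shift (ν : Measure ℝ) (hν0 : ν (Set.Iic 0) = 0)
    (hνint : Integrable (fun x => min 1 x) ν) {c s : ℝ} (hs : 0 < s) (hsc : s ≤ c) :
    kumulant ν (c - s) = kumulant ν c + ∑' k : ℕ, s ^ (k+1) * qCoef ν c (k+1) := by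
  have hc : 0 < c := lt_of_lt_of_le hs hsc
  have hcs : 0 ≤ c - s := sub_nonneg.2 hsc
  have hint1 := integrable_kum ν hν0 hνint hcs
  have hint2 := integrable_kum ν hν0 hνint hc.le
  set f : ℕ → ℝ → ℝ := fun k x =>
    (s^(k+1) * ((1:ℝ)/(Nat.factorial (k+1) : ℝ))) * (Real.exp (-(c*x)) * x^(k+1)) with hf
  have hfmeas : ∀ k, AEStronglyMeasurable (f k) ν := fun k =>
    ((measurable_const.mul ((measurable_const_mul c).neg.exp.mul
      (measurable_id.pow_const (k+1))))).aestronglyMeasurable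
  have hpt : ∀ x : ℝ, Real.exp (-((c-s)*x)) - Real.exp (-(c*x)) = ∑' k : ℕ, f k x := by
    intro x
    have h0 : -((c-s)*x) = -(c*x) + s*x := by ring
    rw [h0, Real.exp_add]
    have h1 : Real.exp (-(c*x)) * Real.exp (s*x) - Real.exp (-(c*x))
        = Real.exp (-(c*x)) * (Real.exp (s*x) - 1) := by ring
    rw [h1, exp_sub_one_tsum (s*x), ← tsum_mul_left]
    apply tsum_congr
    intro k
    rw [hf]
    simp only
    rw [mul_pow]
    field_simp
  have hdiffint : Integrable (fun x => Real.exp (-((c-s)*x)) - Real.exp (-(c*x))) ν := by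
    have h := hint1.sub hint2
    apply h.congr
    filter_upwards with x
    simp only [Pi.sub_apply]
    ring
  have hb : ∀ᵐ x ∂ν, (∑' k, (‖f k x‖₊ : ENNReal))
      = ENNReal.ofReal (Real.exp (-((c-s)*x)) - Real.exp (-(c*x))) := by
    filter_upwards [ae_pos_of_Iic ν hν0] with x hx
    have hnn : ∀ k, 0 ≤ f k x := fun k => by
      rw [hf]; simp only; positivity
    have hsumm : Summable (fun k => f k x) := summable_fkx c s x
    rw [hpt x, ENNReal.ofReal_tsum_of_nonneg hnn hsumm]
    apply tsum_congr
    intro k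
    exact Real.enorm_eq_ofReal (hnn k)
  have hlint : (∑' k, ∫⁻ x, (‖f k x‖₊ : ENNReal) ∂ν) ≠ ⊤ := by
    rw [← lintegral_tsum (f := fun k x => (‖f k x‖₊ : ENNReal)) (fun k => (hfmeas k).enorm)]
    rw [lintegral_congr_ae hb]
    have hlt : (∫⁻ x, ENNReal.ofReal (Real.exp (-((c-s)*x)) - Real.exp (-(c*x))) ∂ν) < ⊤ := by
      calc (∫⁻ x, ENNReal.ofReal (Real.exp (-((c-s)*x)) - Real.exp (-(c*x))) ∂ν)
          ≤ ∫⁻ x, (‖Real.exp (-((c-s)*x)) - Real.exp (-(c*x))‖₊ : ENNReal) ∂ν :=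
            lintegral_mono fun x => Real.ofReal_le_enorm _
        _ < ⊤ := hdiffint.2
    exact hlt.ne
  have hinter := integral_tsum hfmeas hlint
  have hIfk : ∀ k : ℕ, ∫ x, f k x ∂ν = s^(k+1) * qCoef ν c (k+1) := by
    intro k
    rw [hf]
    simp only
    rw [MeasureTheory.integral_const_mul]
    rw [qCoef]
    ring
  have hdiff : kumulant ν (c-s) - kumulant ν c
      = ∫ x, (Real.exp (-((c-s)*x)) - Real.exp (-(c*x))) ∂ν := by
    rw [kumulant, kumulant, ← integral_sub hint1 hint2]
    apply integral_congr_ae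
    filter_upwards with x
    ring
  have hfin : (∫ x, (Real.exp (-((c-s)*x)) - Real.exp (-(c*x))) ∂ν)
      = ∑' k : ℕ, s ^ (k+1) * qCoef ν c (k+1) := by
    rw [show (fun x => Real.exp (-((c-s)*x)) - Real.exp (-(c*x))) = fun x => ∑' k, f k x
      from funext hpt]
    rw [hinter]
    exact tsum_congr hIfk
  linarith [hdiff, hfin]

/-- Compound Poisson representation of the Poisson mixture of random-additive-effect
type: its Laplace transform equals `exp(-v + v ℒ_C(θ))` with rate
`v = -(K̄_U(α) + ∑ K̄_{Vᵢ}(1))` and jump-size Laplace transform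
`ℒ_C(θ) = (1/v)[∑_{k≥1} (∑ αᵢ e^{-θᵢ})^k q_k^{(U)} + ∑ᵢ ∑_{k≥1} e^{-θᵢ k} q_k^{(Vᵢ)}]`. -/
theorem poisson_mixture_compound_poisson
    {Ω : Type*} [MeasurableSpace Ω] (μ : Measure Ω) [IsProbabilityMeasure μ]
    (n : ℕ) (X : Fin n → Ω → ℝ) (hXm : ∀ i, Measurable (X i))
    (νU : Measure ℝ) (νV : Fin n → Measure ℝ)
    -- Lévy measures on (0,∞) of the driftless subordinators U, V₁, …, V_n
    (hνU0 : νU (Set.Iic 0) = 0) (hνV0 : ∀ i, νV i (Set.Iic 0) = 0)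
    (hνUint : Integrable (fun x => min 1 x) νU)
    (hνVint : ∀ i, Integrable (fun x => min 1 x) (νV i))
    (α : Fin n → ℝ) (hα : ∀ i, 0 ≤ α i)
    -- conditionally on Z_i = αᵢ U + Vᵢ, the X_i are independent Poisson(Z_i), so that
    -- the Laplace transform of X is the Poisson mixture transform:
    (hmix : ∀ θ : Fin n → ℝ, (∀ i, 0 < θ i) →
      ∫ ω, Real.exp (-∑ i, θ i * X i ω) ∂μ =
        Real.exp (kumulant νU (∑ i, α i * (1 - Real.exp (-θ i))) +
          ∑ i, kumulant (νV i) (1 - Real.exp (-θ i)))) :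
    ∀ θ : Fin n → ℝ, (∀ i, 0 < θ i) →
      ∫ ω, Real.exp (-∑ i, θ i * X i ω) ∂μ =
        Real.exp (-(-(kumulant νU (∑ i, α i) + ∑ i, kumulant (νV i) 1)) +
          (-(kumulant νU (∑ i, α i) + ∑ i, kumulant (νV i) 1)) *
            ((1 / (-(kumulant νU (∑ i, α i) + ∑ i, kumulant (νV i) 1))) *
              (∑' k : ℕ,
                  (∑ i, α i * Real.exp (-θ i)) ^ (k + 1) *
                    qCoef νU (∑ i, α i) (k + 1) +
                ∑ i, ∑' k : ℕ,
                  Real.exp (-(θ i * (k + 1))) * qCoef (νV i) 1 (k + 1)))) := by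
  intro θ hθ
  rw [hmix θ hθ]
  set c : ℝ := ∑ i, α i with hcdef
  set s : ℝ := ∑ i, α i * Real.exp (-θ i) with hsdef
  have hβ : ∑ i, α i * (1 - Real.exp (-θ i)) = c - s := by
    rw [hcdef, hsdef, ← Finset.sum_sub_distrib]
    exact Finset.sum_congr rfl fun i _ => by ring
  have hexple : ∀ i, Real.exp (-θ i) ≤ 1 := fun i =>
    Real.exp_le_one_iff.2 (by linarith [hθ i])
  have hsnn : 0 ≤ s :=
    Finset.sum_nonneg fun i _ => mul_nonneg (hα i) (Real.exp_pos _).le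
  have hsc : s ≤ c := Finset.sum_le_sum fun i _ => by
    nlinarith [hexple i, hα i, Real.exp_pos (-θ i)]
  have hU : kumulant νU (c - s) = kumulant νU c + ∑' k : ℕ, s ^ (k+1) * qCoef νU c (k+1) := by
    rcases hsnn.eq_or_lt with h0 | h0
    · have hall : ∀ i ∈ Finset.univ, α i * Real.exp (-θ i) = 0 :=
        (Finset.sum_eq_zero_iff_of_nonneg
          (fun i _ => mul_nonneg (hα i) (Real.exp_pos _).le)).1 h0.symm
      have hαz : ∀ i, α i = 0 := fun i => by
        have h := hall i (Finset.mem_univ i)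
        rcases mul_eq_zero.1 h with h | h
        · exact h
        · exact absurd h (Real.exp_pos _).ne'
      have hc0 : c = 0 := Finset.sum_eq_zero fun i _ => hαz i
      have hs0 : s = 0 := h0.symm
      have hz : ∀ k : ℕ, s ^ (k+1) * qCoef νU c (k+1) = 0 := fun k => by
        rw [hs0, zero_pow (Nat.succ_ne_zero k), zero_mul]
      rw [hs0, sub_zero]
      have hz' : ∀ k : ℕ, (0:ℝ) ^ (k+1) * qCoef νU c (k+1) = 0 := fun k => by simp
      rw [tsum_congr hz', tsum_zero, add_zero]
    · exact kumulant_shift νU hνU0 hνUint h0 hsc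
  have hV : ∀ i, kumulant (νV i) (1 - Real.exp (-θ i))
      = kumulant (νV i) 1
        + ∑' k : ℕ, Real.exp (-(θ i * (k + 1))) * qCoef (νV i) 1 (k + 1) := by
    intro i
    have h := kumulant_shift (νV i) (hνV0 i) (hνVint i) (Real.exp_pos (-θ i)) (hexple i)
    rw [h]
    congr 1
    apply tsum_congr
    intro k
    congr 1
    rw [← Real.exp_nat_mul]
    congr 1
    push_cast
    ring
  have hVs : ∑ i, kumulant (νV i) (1 - Real.exp (-θ i))
      = (∑ i, kumulant (νV i) 1)
        + ∑ i, ∑' k : ℕ, Real.exp (-(θ i * (k + 1))) * qCoef (νV i) 1 (k + 1) := by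
    rw [← Finset.sum_add_distrib]
    exact Finset.sum_congr rfl fun i _ => hV i
  rw [hβ]
  set A : ℝ := kumulant νU c + ∑ i, kumulant (νV i) 1 with hAdef
  set TU : ℝ := ∑' k : ℕ, s ^ (k+1) * qCoef νU c (k+1) with hTUdef
  set TV : ℝ := ∑ i, ∑' k : ℕ, Real.exp (-(θ i * (k + 1))) * qCoef (νV i) 1 (k + 1)
    with hTVdef
  congr 1
  have hLHS : kumulant νU (c - s) + ∑ i, kumulant (νV i) (1 - Real.exp (-θ i))
      = A + (TU + TV) := by
    rw [hU, hVs]; ring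
  rw [hLHS]
  by_cases hA : A = 0
  · rw [hA]
    simp only [neg_zero, zero_mul, add_zero, zero_add]
    have hTUnn : 0 ≤ TU := tsum_nonneg fun k =>
      mul_nonneg (pow_nonneg hsnn _) (qCoef_nonneg νU hνU0 c (k+1))
    have hTVnn : 0 ≤ TV := Finset.sum_nonneg fun i _ => tsum_nonneg fun k =>
      mul_nonneg (Real.exp_pos _).le (qCoef_nonneg (νV i) (hνV0 i) 1 (k+1))
    have hle : A + (TU + TV) ≤ 0 := by
      rw [← hLHS]
      have h1 : kumulant νU (c - s) ≤ 0 := kumulant_nonpos νU hνU0 (by linarith)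
      have h2 : ∀ i ∈ Finset.univ, kumulant (νV i) (1 - Real.exp (-θ i)) ≤ 0 := fun i _ =>
        kumulant_nonpos (νV i) (hνV0 i) (by linarith [hexple i])
      have h3 : ∑ i, kumulant (νV i) (1 - Real.exp (-θ i)) ≤ 0 := Finset.sum_nonpos h2
      linarith
    rw [hA] at hle
    linarith
  · have hA' : -A ≠ 0 := neg_ne_zero.2 hA
    field_simp
end
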